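/- An involution in a good group normalizes every cyclic subgroup of order greater than 2, and centralizes every subgroup isomorphic to the semidirect product C₄ ⋊ C₄ (the nonabelian semidirect product of two cyclic groups of order 4 in which the acting generator inverts the normal generator). -/

import Mathlib

/-- A group is *dihedral* if it is isomorphic to some `DihedralGroup n` with `n ≠ 0`. -/
def IsDihedralGroup (Q : Type*) [Group Q] : Prop :=
  ∃ n : ℕ, n ≠ 0 ∧ Nonempty (Q ≃* DihedralGroup n)

/-- A 2-group `G` is *good* if for all `g h : G` the subgroup `⟨g²⟩` is normal in `G`
and the quotient `⟨g,h⟩/⟨g²⟩` is abelian or dihedral. -/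
def IsGood (G : Type*) [Group G] : Prop :=
  IsPGroup 2 G ∧
  ∀ g h : G, ∃ hn : (Subgroup.zpowers (g ^ 2)).Normal,
    haveI := hn.subgroupOf (Subgroup.closure {g, h})
    (∀ x y : ↥(Subgroup.closure {g, h}) ⧸
        (Subgroup.zpowers (g ^ 2)).subgroupOf (Subgroup.closure {g, h}), x * y = y * x) ∨
    IsDihedralGroup (↥(Subgroup.closure {g, h}) ⧸
        (Subgroup.zpowers (g ^ 2)).subgroupOf (Subgroup.closure {g, h}))

/-- Relations of `C₄ ⋊ C₄ = ⟨x,y ∣ x⁴ = y⁴ = 1, y⁻¹xy = x⁻¹⟩`. -/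
def C4rC4rels : Set (FreeGroup (Fin 2)) :=
  { FreeGroup.of 0 ^ 4, FreeGroup.of 1 ^ 4,
    (FreeGroup.of 1)⁻¹ * FreeGroup.of 0 * FreeGroup.of 1 * FreeGroup.of 0 }

private lemma two_lt_orderOf_aux {G : Type*} [Group G] {a : G} (h4 : a ^ 4 = 1)
    (h2 : a ^ 2 ≠ 1) : 2 < orderOf a := by
  by_contra hle
  push_neg at hle
  have hd : orderOf a ∣ 4 := orderOf_dvd_of_pow_eq_one h4
  have hpos : 0 < orderOf a := Nat.pos_of_dvd_of_pos hd (by norm_num)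
  have h2' : orderOf a ∣ 2 := by interval_cases h : orderOf a <;> norm_num
  exact h2 (orderOf_dvd_iff_pow_eq_one.mp h2')

private lemma dihedral_conj_aux {n : ℕ} (a c : DihedralGroup n) (ha : 2 < orderOf a) :
    c * a * c⁻¹ = a ∨ c * a * c⁻¹ = a⁻¹ := by
  obtain (i | i) := a
  · have hinv : (DihedralGroup.r i)⁻¹ = DihedralGroup.r (-i) :=
      inv_eq_of_mul_eq_one_right
        (by rw [DihedralGroup.r_mul_r, add_neg_cancel, DihedralGroup.one_def])
    obtain (j | j) := c
    · left
      have hcomm : DihedralGroup.r j * DihedralGroup.r i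
          = DihedralGroup.r i * DihedralGroup.r j := by
        rw [DihedralGroup.r_mul_r, DihedralGroup.r_mul_r, add_comm]
      rw [hcomm, mul_inv_cancel_right]
    · right
      have h1 : (DihedralGroup.sr j)⁻¹ = DihedralGroup.sr j :=
        inv_eq_of_mul_eq_one_right (DihedralGroup.sr_mul_self j)
      rw [hinv, h1, DihedralGroup.sr_mul_r, DihedralGroup.sr_mul_sr]
      congr 1
      ring
  · rw [DihedralGroup.orderOf_sr] at ha
    omega

/-- In a good group, an element squaring to `1` conjugates any element of
order `> 2` to itself or its inverse. -/
private lemma good_conj {G : Type*} [Group G] (hgood : IsGood G) {g h : G}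
    (hg2 : g ^ 2 = 1) (hh : 2 < orderOf h) :
    g * h * g⁻¹ = h ∨ g * h * g⁻¹ = h⁻¹ := by
  obtain ⟨hn, hq⟩ := hgood.2 g h
  haveI := hn.subgroupOf (Subgroup.closure {g, h})
  have hgS : g ∈ Subgroup.closure ({g, h} : Set G) :=
    Subgroup.subset_closure (by simp)
  have hhS : h ∈ Subgroup.closure ({g, h} : Set G) :=
    Subgroup.subset_closure (by simp)
  have hbot : (Subgroup.zpowers (g ^ 2)).subgroupOf (Subgroup.closure ({g, h} : Set G)) = ⊥ := by
    rw [hg2, Subgroup.zpowers_one_eq_bot, Subgroup.bot_subgroupOf]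
  have e : (↥(Subgroup.closure ({g, h} : Set G)) ⧸
      (Subgroup.zpowers (g ^ 2)).subgroupOf (Subgroup.closure ({g, h} : Set G))) ≃*
      ↥(Subgroup.closure ({g, h} : Set G)) :=
    (QuotientGroup.quotientMulEquivOfEq hbot).trans QuotientGroup.quotientBot
  set g' : ↥(Subgroup.closure ({g, h} : Set G)) := ⟨g, hgS⟩ with hg'
  set h' : ↥(Subgroup.closure ({g, h} : Set G)) := ⟨h, hhS⟩ with hh'
  have horder : orderOf h' = orderOf h := by
    have := orderOf_injective (Subgroup.closure ({g, h} : Set G)).subtype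
      (Subgroup.subtype_injective _) h'
    exact this.symm
  rcases hq with hab | ⟨n, -, ⟨d⟩⟩
  · left
    have hcomm := hab (e.symm g') (e.symm h')
    have hcomm' : g' * h' = h' * g' := by
      have := congrArg e hcomm
      simpa [map_mul] using this
    have hGcomm : g * h = h * g := congrArg Subtype.val hcomm'
    rw [hGcomm, mul_inv_cancel_right]
  · set ψ := e.symm.trans d with hψ
    have horder2 : orderOf (ψ h') = orderOf h := by
      rw [← horder]
      exact orderOf_injective ψ.toMonoidHom ψ.injective h'
    have hconj := dihedral_conj_aux (ψ h') (ψ g') (by rw [horder2]; exact hh)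
    have hmap : ψ (g' * h' * g'⁻¹) = ψ g' * ψ h' * (ψ g')⁻¹ := by
      simp [map_mul]
    rcases hconj with hc | hc
    · left
      have : g' * h' * g'⁻¹ = h' := ψ.injective (by rw [hmap, hc])
      have := congrArg Subtype.val this
      simpa using this
    · right
      have : g' * h' * g'⁻¹ = h'⁻¹ := ψ.injective (by rw [hmap, hc, map_inv])
      have := congrArg Subtype.val this
      simpa using this

private def fgenC4 : Fin 2 → DihedralGroup 4 × DihedralGroup 4 := fun i =>
  if i = 0 then (DihedralGroup.r 1, 1) else (DihedralGroup.sr 0, DihedralGroup.r 1)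

private lemma hrelsC4 : ∀ r ∈ C4rC4rels, FreeGroup.lift fgenC4 r = 1 := by
  intro r hr
  simp only [C4rC4rels, Set.mem_insert_iff, Set.mem_singleton_iff] at hr
  rcases hr with rfl | rfl | rfl <;>
    simp only [map_pow, map_mul, map_inv, FreeGroup.lift_apply_of, fgenC4] <;> decide

private def fconcC4 : PresentedGroup C4rC4rels →* DihedralGroup 4 × DihedralGroup 4 :=
  PresentedGroup.toGroup hrelsC4

/-- Key facts about the presented group `C₄ ⋊ C₄`. -/
private lemma C4facts :
    ∃ X Y : PresentedGroup C4rC4rels,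
      X ^ 4 = 1 ∧ Y ^ 4 = 1 ∧ Y⁻¹ * X * Y * X = 1 ∧
      X ^ 2 ≠ 1 ∧ Y ^ 2 ≠ 1 ∧ X ^ 2 ≠ Y ^ 2 ∧
      (∀ H : Subgroup (PresentedGroup C4rC4rels), X ∈ H → Y ∈ H → ∀ p, p ∈ H) := by
  refine ⟨PresentedGroup.of 0, PresentedGroup.of 1, ?_, ?_, ?_, ?_, ?_, ?_, ?_⟩
  case _ =>
    have h : PresentedGroup.mk C4rC4rels (FreeGroup.of 0 ^ 4) = 1 :=
      (QuotientGroup.eq_one_iff _).mpr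
        (Subgroup.subset_normalClosure (by simp [C4rC4rels]))
    rw [map_pow] at h
    exact h
  case _ =>
    have h : PresentedGroup.mk C4rC4rels (FreeGroup.of 1 ^ 4) = 1 :=
      (QuotientGroup.eq_one_iff _).mpr
        (Subgroup.subset_normalClosure (by simp [C4rC4rels]))
    rw [map_pow] at h
    exact h
  case _ =>
    have h : PresentedGroup.mk C4rC4rels
        ((FreeGroup.of 1)⁻¹ * FreeGroup.of 0 * FreeGroup.of 1 * FreeGroup.of 0) = 1 :=
      (QuotientGroup.eq_one_iff _).mpr
        (Subgroup.subset_normalClosure (by simp [C4rC4rels]))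
    rw [map_mul, map_mul, map_mul, map_inv] at h
    exact h
  case _ =>
    intro h
    have h2 := congrArg fconcC4 h
    rw [map_pow, map_one] at h2
    simp only [fconcC4, PresentedGroup.toGroup.of] at h2
    revert h2
    simp only [fgenC4]
    decide
  case _ =>
    intro h
    have h2 := congrArg fconcC4 h
    rw [map_pow, map_one] at h2
    simp only [fconcC4, PresentedGroup.toGroup.of] at h2
    revert h2
    simp only [fgenC4]
    decide
  case _ =>
    intro h
    have h2 := congrArg fconcC4 h
    rw [map_pow, map_pow] at h2
    simp only [fconcC4, PresentedGroup.toGroup.of] at h2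
    revert h2
    simp only [fgenC4]
    decide
  case _ =>
    intro H hX hY p
    refine PresentedGroup.generated_by _ H (fun j => ?_) p
    fin_cases j
    · exact hX
    · exact hY

theorem involution_normalizes_and_centralizes (G : Type*) [Group G] (hgood : IsGood G)
    (g : G) (hg : orderOf g = 2) :
    (∀ h : G, 2 < orderOf h → g ∈ Subgroup.normalizer (Subgroup.zpowers h : Set G)) ∧
    (∀ S : Subgroup G, Nonempty (S ≃* PresentedGroup C4rC4rels) →
      ∀ s ∈ S, g * s = s * g) := by
  have hg2 : g ^ 2 = 1 := by rw [← hg]; exact pow_orderOf_eq_one g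
  constructor
  · intro h hh
    have key : ∀ m ∈ Subgroup.zpowers h, g * m * g⁻¹ ∈ Subgroup.zpowers h := by
      rintro m hm
      obtain ⟨k, rfl⟩ := Subgroup.mem_zpowers_iff.mp hm
      rcases good_conj hgood hg2 hh with hc | hc
      · rw [← conj_zpow, hc]
        exact Subgroup.zpow_mem _ (Subgroup.mem_zpowers h) k
      · rw [← conj_zpow, hc]
        exact Subgroup.zpow_mem _ (Subgroup.inv_mem _ (Subgroup.mem_zpowers h)) k
    rw [Subgroup.mem_normalizer_iff]
    intro m
    constructor
    · exact fun hm => key m hm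
    · intro hm
      have h2 := key _ hm
      have h3 : g * (g * m * g⁻¹) * g⁻¹ = m := by
        have hgg : g * g = 1 := by rw [← pow_two]; exact hg2
        calc g * (g * m * g⁻¹) * g⁻¹ = (g * g) * m * (g * g)⁻¹ := by group
          _ = m := by rw [hgg]; simp
      rwa [h3] at h2
  · rintro S ⟨φ⟩ s hs
    obtain ⟨X, Y, rX, rY, rC, nX, nY, nXY, hgen⟩ := C4facts
    set x : G := ((φ.symm X : S) : G) with hxdef
    set y : G := ((φ.symm Y : S) : G) with hydef
    have hx4 : x ^ 4 = 1 := by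
      have h1 : (φ.symm X) ^ 4 = 1 := by rw [← map_pow, rX, map_one]
      have := congrArg (Subtype.val) h1
      simpa using this
    have hy4 : y ^ 4 = 1 := by
      have h1 : (φ.symm Y) ^ 4 = 1 := by rw [← map_pow, rY, map_one]
      have := congrArg (Subtype.val) h1
      simpa using this
    have hx2 : x ^ 2 ≠ 1 := by
      intro hc
      apply nX
      have h1 : (φ.symm X) ^ 2 = 1 := Subtype.ext (by simpa using hc)
      calc X ^ 2 = φ ((φ.symm X) ^ 2) := by rw [map_pow, MulEquiv.apply_symm_apply]
        _ = 1 := by rw [h1, map_one]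
    have hy2 : y ^ 2 ≠ 1 := by
      intro hc
      apply nY
      have h1 : (φ.symm Y) ^ 2 = 1 := Subtype.ext (by simpa using hc)
      calc Y ^ 2 = φ ((φ.symm Y) ^ 2) := by rw [map_pow, MulEquiv.apply_symm_apply]
        _ = 1 := by rw [h1, map_one]
    have hxy2ne : x ^ 2 ≠ y ^ 2 := by
      intro hc
      apply nXY
      have h1 : (φ.symm X) ^ 2 = (φ.symm Y) ^ 2 := Subtype.ext (by simpa using hc)
      calc X ^ 2 = φ ((φ.symm X) ^ 2) := by rw [map_pow, MulEquiv.apply_symm_apply]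
        _ = φ ((φ.symm Y) ^ 2) := by rw [h1]
        _ = Y ^ 2 := by rw [map_pow, MulEquiv.apply_symm_apply]
    have hrelG : y⁻¹ * x * y * x = 1 := by
      have h1 : (φ.symm Y)⁻¹ * (φ.symm X) * (φ.symm Y) * (φ.symm X) = 1 := by
        have := congrArg φ.symm rC
        simpa [map_mul] using this
      have := congrArg (Subtype.val) h1
      simpa using this
    have hconj : y⁻¹ * x * y = x⁻¹ := mul_eq_one_iff_eq_inv.mp hrelG
    have hd : y⁻¹ * x = x⁻¹ * y⁻¹ := by rw [← hconj]; group
    have hc1 : x * y = y * x⁻¹ := by rw [← hconj]; group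
    have hinvconj : y⁻¹ * x⁻¹ * y = x := by
      have h := congrArg Inv.inv hconj
      rw [inv_inv] at h
      calc y⁻¹ * x⁻¹ * y = (y⁻¹ * x * y)⁻¹ := by group
        _ = x := h
    have hc' : y * x = x⁻¹ * y := by
      refine mul_left_cancel (a := y⁻¹) ?_
      calc y⁻¹ * (y * x) = x := by group
        _ = y⁻¹ * (x⁻¹ * y) := by rw [← mul_assoc]; exact hinvconj.symm
    have hd' : y⁻¹ * x⁻¹ = x * y⁻¹ := by
      have h := congrArg Inv.inv hc1
      rw [mul_inv_rev, mul_inv_rev, inv_inv] at h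
      exact h
    have hA : x * x ≠ 1 := by rw [← pow_two]; exact hx2
    have hC : x * x ≠ y * y := by rw [← pow_two, ← pow_two]; exact hxy2ne
    have hxx4 : (x * x) * (x * x) = 1 := by
      calc (x * x) * (x * x) = x ^ 4 := by
            rw [show (4 : ℕ) = 2 * 2 from rfl, pow_mul, pow_two x, pow_two]
        _ = 1 := hx4
    have hxxinv : (x * x)⁻¹ = x * x := inv_eq_of_mul_eq_one_right hxx4
    have keyXY : (x * x) * (y * y) = 1 → False := by
      intro hh
      apply hC
      rw [← hxxinv]
      exact inv_eq_of_mul_eq_one_right hh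
    have keyX : x = x⁻¹ → False := by
      intro hh
      apply hA
      nth_rewrite 2 [hh]
      exact mul_inv_cancel x
    have hox : 2 < orderOf x := two_lt_orderOf_aux hx4 hx2
    have hoy : 2 < orderOf y := two_lt_orderOf_aux hy4 hy2
    have hsq : (x * y) * (x * y) = y * y := by
      calc (x * y) * (x * y) = x * (y * x) * y := by group
        _ = x * (x⁻¹ * y) * y := by rw [hc']
        _ = y * y := by group
    have hsq' : (x * y) ^ 2 = y ^ 2 := by rw [pow_two, pow_two]; exact hsq
    have hoxy : 2 < orderOf (x * y) := by
      refine two_lt_orderOf_aux ?_ ?_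
      · rw [show (4 : ℕ) = 2 * 2 from rfl, pow_mul, hsq', ← pow_mul]
        exact hy4
      · rw [hsq']; exact hy2
    have ginv : g⁻¹ = g := by
      refine inv_eq_of_mul_eq_one_right ?_
      rw [← pow_two]; exact hg2
    rcases good_conj hgood hg2 hox with cx | cx <;>
      rcases good_conj hgood hg2 hoy with cy | cy
    · -- g centralizes x and y, hence all of S
      have hgx : g * x = x * g := by
        have h := congrArg (fun z => z * g) cx
        simpa [inv_mul_cancel_right] using h
      have hgy : g * y = y * g := by
        have h := congrArg (fun z => z * g) cy
        simpa [inv_mul_cancel_right] using h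
      set H : Subgroup (PresentedGroup C4rC4rels) :=
        Subgroup.comap ((S.subtype).comp φ.symm.toMonoidHom)
          (Subgroup.centralizer {g}) with hH
      have hcoeX : ((S.subtype).comp φ.symm.toMonoidHom) X = x := rfl
      have hcoeY : ((S.subtype).comp φ.symm.toMonoidHom) Y = y := rfl
      have hXH : X ∈ H := by
        rw [hH, Subgroup.mem_comap, hcoeX, Subgroup.mem_centralizer_iff]
        rintro m hm
        rw [Set.mem_singleton_iff] at hm
        subst hm
        exact hgx
      have hYH : Y ∈ H := by
        rw [hH, Subgroup.mem_comap, hcoeY, Subgroup.mem_centralizer_iff]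
        rintro m hm
        rw [Set.mem_singleton_iff] at hm
        subst hm
        exact hgy
      have hmem := hgen H hXH hYH (φ ⟨s, hs⟩)
      rw [hH, Subgroup.mem_comap] at hmem
      have hcoe2 : ((S.subtype).comp φ.symm.toMonoidHom) (φ ⟨s, hs⟩) = s := by
        show ((φ.symm (φ ⟨s, hs⟩) : S) : G) = s
        rw [MulEquiv.symm_apply_apply]
      rw [hcoe2] at hmem
      exact Subgroup.mem_centralizer_iff.mp hmem g rfl
    · -- gxg⁻¹ = x, gyg⁻¹ = y⁻¹ : contradiction
      exfalso
      have ht2 : (g * y) ^ 2 = 1 := by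
        have heq : (g * y) ^ 2 = (g * y * g⁻¹) * y := by
          rw [ginv, pow_two]; simp [mul_assoc]
        rw [heq, cy]
        exact inv_mul_cancel y
      have htc := good_conj hgood ht2 hoxy
      have hty : (g * y) * (x * y) * (g * y)⁻¹ = y⁻¹ * x := by
        calc (g * y) * (x * y) * (g * y)⁻¹ = (g * y * g⁻¹) * (g * x * g⁻¹) := by group
          _ = y⁻¹ * x := by rw [cy, cx]
      rw [hty, hd] at htc
      rcases htc with h | h
      · apply keyXY
        calc (x * x) * (y * y) = x * (x * y) * y := by group
          _ = x * (x⁻¹ * y⁻¹) * y := by rw [← h]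
          _ = 1 := by group
      · rw [mul_inv_rev, hd'] at h
        exact keyX (mul_right_cancel h).symm
    · -- gxg⁻¹ = x⁻¹, gyg⁻¹ = y : contradiction
      exfalso
      have hgxy : g * (x * y) * g⁻¹ = x⁻¹ * y := by
        calc g * (x * y) * g⁻¹ = (g * x * g⁻¹) * (g * y * g⁻¹) := by group
          _ = x⁻¹ * y := by rw [cx, cy]
      have htc := good_conj hgood hg2 hoxy
      rw [hgxy] at htc
      rcases htc with h | h
      · exact keyX (mul_right_cancel h).symm
      · rw [mul_inv_rev, hd'] at h
        apply hC
        have h2 : y * y = x * x := by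
          calc y * y = x * (x⁻¹ * y) * y := by group
            _ = x * (x * y⁻¹) * y := by rw [h]
            _ = x * x := by simp [mul_assoc]
        exact h2.symm
    · -- gxg⁻¹ = x⁻¹, gyg⁻¹ = y⁻¹ : contradiction
      exfalso
      have ht2 : (g * x) ^ 2 = 1 := by
        have heq : (g * x) ^ 2 = (g * x * g⁻¹) * x := by
          rw [ginv, pow_two]; simp [mul_assoc]
        rw [heq, cx]
        exact inv_mul_cancel x
      have htc := good_conj hgood ht2 hoy
      have hty : (g * x) * y * (g * x)⁻¹ = x⁻¹ * (y⁻¹ * x) := by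
        calc (g * x) * y * (g * x)⁻¹
            = (g * x * g⁻¹) * (g * y * g⁻¹) * (g * x * g⁻¹)⁻¹ := by group
          _ = x⁻¹ * y⁻¹ * (x⁻¹)⁻¹ := by rw [cx, cy]
          _ = x⁻¹ * (y⁻¹ * x) := by group
      rw [hty, hd] at htc
      rcases htc with h | h
      · apply keyXY
        calc (x * x) * (y * y) = (x * x) * ((x⁻¹ * (x⁻¹ * y⁻¹)) * y) := by rw [h]
          _ = 1 := by group
      · apply hA
        calc x * x = ((x⁻¹ * (x⁻¹ * y⁻¹)) * y)⁻¹ := by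
              simp [mul_inv_rev, mul_assoc]
          _ = (y⁻¹ * y)⁻¹ := by rw [h]
          _ = 1 := by group
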